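/- Let n ∈ ℕ with n ≥ 1, let r, v ∈ ℝⁿ, let W = diag(w₁,…,wₙ) with wᵢ ≥ 0 and vᵀWv = Σᵢ wᵢvᵢ² > 0, and let λ' ≥ 0. Then the function f(x) = (1/(2n)) Σᵢ wᵢ (rᵢ − x·vᵢ)² + λ'·|x| on ℝ has the unique global minimizer x̂ = S(vᵀWr, n·λ') / (vᵀWv), where vᵀWr = Σᵢ wᵢvᵢrᵢ. -/

import Mathlib

noncomputable def softThresh (x u : ℝ) : ℝ := Real.sign x * max (|x| - u) 0

lemma key_lemma (a b l : ℝ) (ha : 0 < a) (hl : 0 ≤ l) (x : ℝ)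
    (hx : x ≠ softThresh b l / a) :
    a * (softThresh b l / a) ^ 2 - 2 * b * (softThresh b l / a)
      + 2 * l * |softThresh b l / a|
      < a * x ^ 2 - 2 * b * x + 2 * l * |x| := by
  rcases le_or_gt (|b|) l with h | h
  · have hs : softThresh b l = 0 := by
      unfold softThresh
      rw [max_eq_right (by linarith)]
      ring
    rw [hs] at hx ⊢
    simp only [zero_div, abs_zero] at hx ⊢
    have hx0 : x ≠ 0 := by simpa using hx
    have hbx : b * x ≤ |b| * |x| := by rw [← abs_mul]; exact le_abs_self _
    nlinarith [mul_pos ha (sq_pos_of_ne_zero hx0), abs_nonneg x,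
      mul_le_mul_of_nonneg_right h (abs_nonneg x)]
  · rcases lt_trichotomy b 0 with hb | hb | hb
    · have hs : softThresh b l = b + l := by
        unfold softThresh
        rw [Real.sign_of_neg hb, abs_of_neg hb, max_eq_left (by rw [abs_of_neg hb] at h; linarith)]
        ring
      rw [hs] at hx ⊢
      have habs : |b| = -b := abs_of_neg hb
      have hxh : a * ((b + l) / a) = b + l := by field_simp
      have h' : l < -b := by rwa [habs] at h
      have hxhneg : (b + l) / a < 0 := div_neg_of_neg_of_pos (by linarith) ha
      rw [abs_of_neg hxhneg]
      have hne : x - (b + l) / a ≠ 0 := sub_ne_zero.2 hx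
      nlinarith [mul_pos ha (sq_pos_of_ne_zero hne), neg_abs_le x,
        mul_nonneg hl (by linarith [neg_abs_le x] : (0:ℝ) ≤ |x| + x)]
    · simp [hb, abs_of_nonneg hl] at h; linarith
    · have hs : softThresh b l = b - l := by
        unfold softThresh
        rw [Real.sign_of_pos hb, abs_of_pos hb, max_eq_left (by rw [abs_of_pos hb] at h; linarith)]
        ring
      rw [hs] at hx ⊢
      have habs : |b| = b := abs_of_pos hb
      have hxh : a * ((b - l) / a) = b - l := by field_simp
      have h' : l < b := by rwa [habs] at h
      have hxhpos : 0 < (b - l) / a := div_pos (by linarith) ha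
      rw [abs_of_pos hxhpos]
      have hne : x - (b - l) / a ≠ 0 := sub_ne_zero.2 hx
      nlinarith [mul_pos ha (sq_pos_of_ne_zero hne), le_abs_self x,
        mul_nonneg hl (by linarith [le_abs_self x] : (0:ℝ) ≤ |x| - x)]

theorem stmt2 (n : ℕ) (hn : 1 ≤ n) (r v w : Fin n → ℝ) (hw : ∀ i, 0 ≤ w i)
    (hv : 0 < ∑ i, w i * v i ^ 2) (lam' : ℝ) (hlam' : 0 ≤ lam') :
    let f : ℝ → ℝ := fun x =>
      1 / (2 * (n : ℝ)) * ∑ i, w i * (r i - x * v i) ^ 2 + lam' * |x|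
    let xhat : ℝ := softThresh (∑ i, w i * v i * r i) ((n : ℝ) * lam') / (∑ i, w i * v i ^ 2)
    (∀ x : ℝ, f xhat ≤ f x) ∧ (∀ x : ℝ, f x ≤ f xhat → x = xhat) := by
  intro f xhat
  set a := ∑ i, w i * v i ^ 2 with ha_def
  set b := ∑ i, w i * v i * r i with hb_def
  set c := ∑ i, w i * r i ^ 2 with hc_def
  have hnpos : (0:ℝ) < n := by exact_mod_cast hn
  have hl : 0 ≤ (n:ℝ) * lam' := mul_nonneg hnpos.le hlam'
  have expand : ∀ x : ℝ, ∑ i, w i * (r i - x * v i) ^ 2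
      = c - 2 * x * b + x ^ 2 * a := by
    intro x
    have h1 : ∀ i, w i * (r i - x * v i) ^ 2
        = w i * r i ^ 2 - 2 * x * (w i * v i * r i) + x ^ 2 * (w i * v i ^ 2) :=
      fun i => by ring
    simp_rw [h1, Finset.sum_add_distrib, Finset.sum_sub_distrib, ← Finset.mul_sum]
    rfl
  have hf : ∀ x : ℝ, f x = 1 / (2 * (n:ℝ)) *
      (a * x ^ 2 - 2 * b * x + 2 * ((n:ℝ) * lam') * |x| + c) := by
    intro x
    show 1 / (2 * (n : ℝ)) * ∑ i, w i * (r i - x * v i) ^ 2 + lam' * |x| = _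
    rw [expand x]
    field_simp
    ring
  have hkey := fun x hx => key_lemma a b ((n:ℝ) * lam') hv hl x hx
  have hmono : ∀ x : ℝ, x ≠ xhat → f xhat < f x := by
    intro x hx
    rw [hf x, hf xhat]
    have := hkey x hx
    have h2n : (0:ℝ) < 1 / (2 * (n:ℝ)) := by positivity
    apply mul_lt_mul_of_pos_left _ h2n
    linarith
  constructor
  · intro x
    rcases eq_or_ne x xhat with rfl | hx
    · exact le_rfl
    · exact (hmono x hx).le
  · intro x hfx
    by_contra hx
    exact absurd hfx (not_le.2 (hmono x hx))
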